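/- In the 'cut' phase of the Modified Cut-and-Choose mechanism, for any target partition (X_1, X_2) of the goods, agent 1 can report a bid vector that forces the mechanism to construct bundles (E_1, E_2) with {E_1, E_2} = {X_1, X_2}. -/

import Mathlib

open Finset

/-- The goods sorted in decreasing order of agent 1's true values, ties broken
lexicographically. -/
noncomputable def sortedGoods {m : ℕ} (v1 : Fin m → ℝ) : List (Fin m) :=
  (List.finRange m).mergeSort
    (fun g h => @decide (v1 h < v1 g ∨ (v1 g = v1 h ∧ g ≤ h)) (Classical.propDecidable _))

/-- The cut phase of Mod-Cut&Choose: goods are processed in decreasing order of agent 1's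
true values `v1` (ties lexicographic) and each good is added to the bundle with the smaller
total reported bid `b1` (ties in favor of the first bundle). -/
noncomputable def cutPhase {m : ℕ} (v1 b1 : Fin m → ℝ) : Finset (Fin m) × Finset (Fin m) :=
  (sortedGoods v1).foldl
    (fun E g =>
      if ∑ x ∈ E.1, b1 x ≤ ∑ x ∈ E.2, b1 x then (insert g E.1, E.2) else (E.1, insert g E.2))
    (∅, ∅)

/-- Bid 1 on a good whose successor (in the given list) lies in the other part, 0 otherwise. -/
def mkBid {m : ℕ} (X : Finset (Fin m)) : List (Fin m) → Fin m → ℝ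
  | [] => fun _ => 0
  | [_] => fun _ => 0
  | a :: c :: t => fun g =>
      if g = a then (if (a ∈ X ↔ c ∈ X) then 0 else 1) else mkBid X (c :: t) g

lemma mkBid_nonneg {m : ℕ} (X : Finset (Fin m)) :
    ∀ (l : List (Fin m)) (g : Fin m), 0 ≤ mkBid X l g
  | [], g => le_refl 0
  | [_], g => le_refl 0
  | a :: c :: t, g => by
      simp only [mkBid]
      split
      · split <;> norm_num
      · exact mkBid_nonneg X (c :: t) g

lemma mkBid_chain {m : ℕ} (X : Finset (Fin m)) :
    ∀ (l : List (Fin m)) (b : Fin m → ℝ), l.Nodup → (∀ g ∈ l, b g = mkBid X l g) →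
      List.Chain' (fun a c => b a = if (a ∈ X ↔ c ∈ X) then 0 else 1) l
  | [], b, _, _ => List.isChain_nil
  | [a], b, _, _ => List.isChain_singleton a
  | a :: c :: t, b, hnd, hb => by
      refine List.isChain_cons_cons.2 ?_
      constructor
      · rw [hb a (by simp)]; simp [mkBid]
      · apply mkBid_chain X (c :: t) b (hnd.of_cons)
        intro g hg
        have hga : g ≠ a := by
          rintro rfl
          exact (List.nodup_cons.1 hnd).1 hg
        rw [hb g (List.mem_cons_of_mem a hg)]; simp only [mkBid, if_neg hga]

lemma fold_invariant {m : ℕ} (X : Finset (Fin m)) (b : Fin m → ℝ) :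
    ∀ (l : List (Fin m)) (E1 E2 : Finset (Fin m)),
      l.Nodup →
      (∀ g ∈ l, g ∉ E1 ∧ g ∉ E2) →
      List.Chain' (fun a c => b a = if (a ∈ X ↔ c ∈ X) then 0 else 1) l →
      (∀ a ∈ l.head?, (∑ x ∈ E1, b x) - (∑ x ∈ E2, b x) = if a ∈ X then 0 else 1) →
      l.foldl
        (fun E g =>
          if ∑ x ∈ E.1, b x ≤ ∑ x ∈ E.2, b x then (insert g E.1, E.2) else (E.1, insert g E.2))
        (E1, E2)
        = (E1 ∪ (l.filter (· ∈ X)).toFinset, E2 ∪ (l.filter (· ∉ X)).toFinset)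
  | [], E1, E2, _, _, _, _ => by simp
  | a :: t, E1, E2, hnd, hdisj, hch, hhead => by
      have hdiff : (∑ x ∈ E1, b x) - (∑ x ∈ E2, b x) = if a ∈ X then 0 else 1 :=
        hhead a rfl
      have haE1 : a ∉ E1 := (hdisj a (by simp)).1
      have haE2 : a ∉ E2 := (hdisj a (by simp)).2
      have hch' : List.Chain' (fun a c => b a = if (a ∈ X ↔ c ∈ X) then 0 else 1) t :=
        hch.tail
      have hba : ∀ c ∈ t.head?, b a = if (a ∈ X ↔ c ∈ X) then 0 else 1 := by
        intro c hc
        cases t with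
        | nil => simp at hc
        | cons c' t' =>
            simp only [List.head?_cons, Option.mem_some_iff] at hc
            subst hc
            exact (List.isChain_cons_cons.1 hch).1
      by_cases haX : a ∈ X
      · have hle : ∑ x ∈ E1, b x ≤ ∑ x ∈ E2, b x := by
          rw [if_pos haX] at hdiff; linarith
        simp only [List.foldl_cons, if_pos hle]
        rw [fold_invariant X b t (insert a E1) E2 hnd.of_cons
          (fun g hg => ⟨by
              simp only [Finset.mem_insert, not_or]
              exact ⟨fun h => (List.nodup_cons.1 hnd).1 (h ▸ hg),
                (hdisj g (List.mem_cons_of_mem a hg)).1⟩,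
            (hdisj g (List.mem_cons_of_mem a hg)).2⟩)
          hch'
          (by
            intro c hc
            rw [Finset.sum_insert haE1]
            rw [if_pos haX] at hdiff
            rw [hba c hc]
            by_cases hcX : c ∈ X
            · rw [if_pos hcX, if_pos (iff_of_true haX hcX)]; linarith
            · rw [if_neg hcX, if_neg (by simp [haX, hcX])]; linarith)]
        have hfX : (a :: t).filter (· ∈ X) = a :: t.filter (· ∈ X) := by
          simp [List.filter_cons, haX]
        have hfX' : (a :: t).filter (· ∉ X) = t.filter (· ∉ X) := by
          simp [List.filter_cons, haX]
        rw [hfX, hfX', List.toFinset_cons, Finset.insert_union, Finset.union_insert]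
      · have hle : ¬ (∑ x ∈ E1, b x ≤ ∑ x ∈ E2, b x) := by
          rw [if_neg haX] at hdiff; intro h; linarith
        simp only [List.foldl_cons, if_neg hle]
        rw [fold_invariant X b t E1 (insert a E2) hnd.of_cons
          (fun g hg => ⟨(hdisj g (List.mem_cons_of_mem a hg)).1, by
              simp only [Finset.mem_insert, not_or]
              exact ⟨fun h => (List.nodup_cons.1 hnd).1 (h ▸ hg),
                (hdisj g (List.mem_cons_of_mem a hg)).2⟩⟩)
          hch'
          (by
            intro c hc
            rw [Finset.sum_insert haE2]
            rw [if_neg haX] at hdiff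
            rw [hba c hc]
            by_cases hcX : c ∈ X
            · rw [if_pos hcX, if_neg (by simp [haX, hcX])]; linarith
            · rw [if_neg hcX, if_pos (iff_of_false haX hcX)]; linarith)]
        have hfX : (a :: t).filter (· ∈ X) = t.filter (· ∈ X) := by
          simp [List.filter_cons, haX]
        have hfX' : (a :: t).filter (· ∉ X) = a :: t.filter (· ∉ X) := by
          simp [List.filter_cons, haX]
        rw [hfX, hfX', List.toFinset_cons, Finset.insert_union, Finset.union_insert]

theorem cutPhase_force_any_partition {m : ℕ} (v1 : Fin m → ℝ) (hv1 : ∀ g, 0 ≤ v1 g)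
    (X₁ X₂ : Finset (Fin m)) (hdisj : Disjoint X₁ X₂) (hcover : X₁ ∪ X₂ = Finset.univ) :
    ∃ b1 : Fin m → ℝ, (∀ g, 0 ≤ b1 g) ∧
      ((cutPhase v1 b1).1 = X₁ ∧ (cutPhase v1 b1).2 = X₂ ∨
       (cutPhase v1 b1).1 = X₂ ∧ (cutPhase v1 b1).2 = X₁) := by
  set L := sortedGoods v1 with hL
  have hnd : L.Nodup :=
    ((List.mergeSort_perm _ _).nodup_iff).2 (List.nodup_finRange m)
  have hLfin : L.toFinset = Finset.univ := by
    rw [hL, sortedGoods, List.toFinset_eq_of_perm _ _ (List.mergeSort_perm _ _),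
      List.toFinset_finRange]
  have hcompl : ∀ g : Fin m, g ∉ X₁ ↔ g ∈ X₂ := by
    intro g
    constructor
    · intro h
      have : g ∈ X₁ ∪ X₂ := hcover ▸ Finset.mem_univ g
      rcases Finset.mem_union.1 this with h' | h'
      · exact absurd h' h
      · exact h'
    · intro h h'
      exact Finset.disjoint_left.1 hdisj h' h
  have key : ∀ (X : Finset (Fin m)), (∀ a ∈ L.head?, a ∈ X) →
      cutPhase v1 (mkBid X L) = (X, Xᶜ) := by
    intro X hhd
    have := fold_invariant X (mkBid X L) L ∅ ∅ hnd (by simp)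
      (mkBid_chain X L (mkBid X L) hnd (fun _ _ => rfl))
      (by
        intro a ha
        simp only [Finset.sum_empty, sub_zero]
        rw [if_pos (hhd a ha)])
    rw [cutPhase, ← hL, this]
    have h1 : (L.filter (· ∈ X)).toFinset = X := by
      rw [List.toFinset_filter, hLfin]
      ext g; simp
    have h2 : (L.filter (· ∉ X)).toFinset = Xᶜ := by
      rw [List.toFinset_filter, hLfin]
      ext g; simp
    rw [h1, h2, Finset.empty_union, Finset.empty_union]
  have hX2c : X₂ = X₁ᶜ := by
    ext g; rw [Finset.mem_compl, ← hcompl]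
  have hX1c : X₁ = X₂ᶜ := by
    rw [hX2c, compl_compl]
  cases hLc : L with
  | nil =>
      refine ⟨fun _ => 0, fun _ => le_refl 0, Or.inl ?_⟩
      have hm : (Finset.univ : Finset (Fin m)) = ∅ := by
        rw [← hLfin, hLc, List.toFinset_nil]
      have h1 : X₁ = ∅ := Finset.subset_empty.1 (hm ▸ (X₁.subset_univ))
      have h2 : X₂ = ∅ := Finset.subset_empty.1 (hm ▸ (X₂.subset_univ))
      rw [cutPhase, ← hL, hLc]
      simp [h1, h2]
  | cons a t =>
      by_cases haX : a ∈ X₁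
      · have hhd : ∀ x ∈ L.head?, x ∈ X₁ := by
          rw [hLc]
          intro x hx
          simp only [List.head?_cons, Option.mem_some_iff] at hx
          exact hx ▸ haX
        refine ⟨mkBid X₁ L, mkBid_nonneg X₁ L, Or.inl ?_⟩
        rw [key X₁ hhd]
        exact ⟨rfl, hX2c.symm⟩
      · have hhd : ∀ x ∈ L.head?, x ∈ X₂ := by
          rw [hLc]
          intro x hx
          simp only [List.head?_cons, Option.mem_some_iff] at hx
          exact hx ▸ (hcompl a).1 haX
        refine ⟨mkBid X₂ L, mkBid_nonneg X₂ L, Or.inr ?_⟩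
        rw [key X₂ hhd]
        exact ⟨rfl, hX1c.symm⟩
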